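/- (Pythagorean Won-Loss Formula) Let X and Y be independent random variables with Weibull distributions with parameters (α_RS, β, γ) and (α_RA, β, γ) respectively, where α_RS, α_RA, γ > 0. Then Prob(X > Y) = α_RS^γ / (α_RS^γ + α_RA^γ). -/

import Mathlib

open MeasureTheory Real

/-- The Weibull probability density function with parameters `α` (scale),
`β` (shift) and `γ` (shape). -/
noncomputable def weibullPDF (α β γ : ℝ) (x : ℝ) : ℝ :=
  if β ≤ x then (γ / α) * ((x - β) / α) ^ (γ - 1) * Real.exp (-((x - β) / α) ^ γ) else 0

/-- The Weibull measure: Lebesgue measure with the Weibull density. -/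
noncomputable def weibullMeasure (α β γ : ℝ) : Measure ℝ :=
  volume.withDensity fun x => ENNReal.ofReal (weibullPDF α β γ x)

open Set Filter

namespace WBaux

/-- the normalized density in `p`-form -/
noncomputable def f (β γ p x : ℝ) : ℝ :=
  γ * p * (x - β) ^ (γ - 1) * Real.exp (-p * (x - β) ^ γ)

/-- antiderivative -/
noncomputable def φ (β γ p x : ℝ) : ℝ := -Real.exp (-p * (x - β) ^ γ)

lemma hasDerivAt_φ (β γ p : ℝ) {x : ℝ} (hx : β < x) :
    HasDerivAt (φ β γ p) (f β γ p x) x := by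
  have h1 : HasDerivAt (fun y : ℝ => y - β) 1 x := (hasDerivAt_id x).sub_const β
  have h2 : HasDerivAt (fun y : ℝ => (y - β) ^ γ) (γ * (x - β) ^ (γ - 1)) x := by
    have := (Real.hasDerivAt_rpow_const (x := x - β) (p := γ)
      (Or.inl (by linarith))).comp x h1
    rw [mul_one] at this
    exact this
  have h3 : HasDerivAt (fun y : ℝ => -p * (y - β) ^ γ)
      (-p * (γ * (x - β) ^ (γ - 1))) x := h2.const_mul (-p)
  have h4 := h3.exp
  have h5 := h4.neg
  convert h5 using 1
  · rfl
  · rfl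
  · rfl
  unfold f
  ring

lemma continuous_φ (β γ p : ℝ) (hγ : 0 < γ) : Continuous (φ β γ p) := by
  have h1 : Continuous fun y : ℝ => (y - β) ^ γ := by
    rw [continuous_iff_continuousAt]
    intro x
    exact (Real.continuousAt_rpow_const _ _ (Or.inr hγ.le)).comp
      ((continuousAt_id).sub continuousAt_const)
  exact (Real.continuous_exp.comp (continuous_const.mul h1)).neg

lemma tendsto_φ (β γ p : ℝ) (hγ : 0 < γ) (hp : 0 < p) :
    Tendsto (φ β γ p) atTop (nhds 0) := by
  have h1 : Tendsto (fun y : ℝ => (y - β) ^ γ) atTop atTop := by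
    apply (tendsto_rpow_atTop hγ).comp
    exact tendsto_atTop_add_const_right _ (-β) tendsto_id
  have h2 : Tendsto (fun y : ℝ => -p * (y - β) ^ γ) atTop atBot :=
    h1.const_mul_atTop_of_neg (by linarith)
  have h3 := (Real.tendsto_exp_atBot.comp h2).neg
  unfold φ
  simpa [neg_mul] using h3

lemma φ_at_β (β γ p : ℝ) (hγ : 0 < γ) : φ β γ p β = -1 := by
  simp [φ, Real.zero_rpow hγ.ne']

lemma f_nonneg (β γ p : ℝ) (hγ : 0 < γ) (hp : 0 ≤ p) {x : ℝ} (hx : β ≤ x) :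
    0 ≤ f β γ p x :=
  mul_nonneg (mul_nonneg (mul_nonneg hγ.le hp) (Real.rpow_nonneg (by linarith) _))
    (Real.exp_nonneg _)

lemma integrableOn_f (β γ p : ℝ) (hγ : 0 < γ) (hp : 0 < p) :
    IntegrableOn (f β γ p) (Ioi β) volume :=
  integrableOn_Ioi_deriv_of_nonneg (continuous_φ β γ p hγ).continuousWithinAt
    (fun x hx => hasDerivAt_φ β γ p hx) (fun x hx => f_nonneg β γ p hγ hp.le (le_of_lt hx))
    (tendsto_φ β γ p hγ hp)

lemma integral_f (β γ p : ℝ) (hγ : 0 < γ) (hp : 0 < p) :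
    ∫ x in Ioi β, f β γ p x = 1 := by
  rw [integral_Ioi_of_hasDerivAt_of_nonneg (continuous_φ β γ p hγ).continuousWithinAt
    (fun x hx => hasDerivAt_φ β γ p hx) (fun x hx => f_nonneg β γ p hγ hp.le (le_of_lt hx))
    (tendsto_φ β γ p hγ hp), φ_at_β β γ p hγ]
  ring

lemma integral_f_Ioo (β γ p : ℝ) (hγ : 0 < γ) (hp : 0 < p) {x : ℝ} (hx : β ≤ x) :
    ∫ y in Ioo β x, f β γ p y = 1 - Real.exp (-p * (x - β) ^ γ) := by
  rw [← MeasureTheory.integral_Ioc_eq_integral_Ioo,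
    ← intervalIntegral.integral_of_le hx]
  rw [intervalIntegral.integral_eq_sub_of_hasDeriv_right_of_le hx
    ((continuous_φ β γ p hγ).continuousOn)
    (fun y hy => (hasDerivAt_φ β γ p hy.1).hasDerivWithinAt)
    (((intervalIntegrable_iff_integrableOn_Ioc_of_le hx).2
      ((integrableOn_f β γ p hγ hp).mono_set Ioc_subset_Ioi_self)))]
  rw [φ_at_β β γ p hγ]
  unfold φ
  ring

lemma measurable_pdf (α β γ : ℝ) : Measurable (weibullPDF α β γ) := by
  unfold weibullPDF
  apply Measurable.ite measurableSet_Ici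
  · fun_prop
  · exact measurable_const

lemma pdf_eq (α β γ : ℝ) (hα : 0 < α) {y : ℝ} (hy : β ≤ y) :
    weibullPDF α β γ y = f β γ (α ^ γ)⁻¹ y := by
  have hy' : (0:ℝ) ≤ y - β := by linarith
  have hαγ : (0:ℝ) < α ^ γ := Real.rpow_pos_of_pos hα γ
  unfold weibullPDF f
  rw [if_pos hy, Real.div_rpow hy' hα.le, Real.div_rpow hy' hα.le]
  have h1 : α ^ (γ - 1) * α = α ^ γ := by
    have h := Real.rpow_add hα (γ - 1) 1
    simp only [Real.rpow_one] at h
    rw [← h]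
    ring_nf
  have h2 : α ^ (γ - 1) ≠ 0 := (Real.rpow_pos_of_pos hα _).ne'
  have hexp : -((y - β) ^ γ / α ^ γ) = -(α ^ γ)⁻¹ * (y - β) ^ γ := by
    field_simp
  rw [hexp, ← h1]
  congr 1
  rw [mul_inv]
  field_simp

lemma cdf_of_le (α β γ : ℝ) {x : ℝ} (hx : x ≤ β) :
    weibullMeasure α β γ (Iio x) = 0 := by
  rw [weibullMeasure, withDensity_apply _ measurableSet_Iio]
  rw [setLIntegral_congr_fun measurableSet_Iio
    ((fun y (hy : y < x) => by
      rw [weibullPDF, if_neg (by linarith), ENNReal.ofReal_zero]))]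
  simp

lemma cdf_of_ge (α β γ : ℝ) (hα : 0 < α) (hγ : 0 < γ) {x : ℝ} (hx : β ≤ x) :
    weibullMeasure α β γ (Iio x)
      = ENNReal.ofReal (1 - Real.exp (-(α ^ γ)⁻¹ * (x - β) ^ γ)) := by
  have hp : (0:ℝ) < (α ^ γ)⁻¹ := inv_pos.2 (Real.rpow_pos_of_pos hα γ)
  rw [weibullMeasure, withDensity_apply _ measurableSet_Iio]
  have hae : ∀ᵐ y ∂(volume.restrict (Iio x)),
      ENNReal.ofReal (weibullPDF α β γ y)
        = Set.indicator (Ioi β) (fun y => ENNReal.ofReal (f β γ (α ^ γ)⁻¹ y)) y := by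
    apply ae_restrict_of_ae
    rw [ae_iff]
    refine measure_mono_null ?_ (measure_singleton β)
    intro y hy
    simp only [Set.mem_setOf_eq] at hy
    by_contra hne
    rcases lt_trichotomy y β with h | h | h
    · exact hy (by
        rw [weibullPDF, if_neg (by linarith), ENNReal.ofReal_zero,
          Set.indicator_of_notMem (Set.notMem_Ioi.2 h.le)])
    · exact hne h
    · exact hy (by
        rw [Set.indicator_of_mem (Set.mem_Ioi.2 h), pdf_eq α β γ hα h.le])
  rw [lintegral_congr_ae hae, lintegral_indicator measurableSet_Ioi _,
    Measure.restrict_restrict measurableSet_Ioi, Set.Ioi_inter_Iio]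
  rw [← ofReal_integral_eq_lintegral_ofReal
    (((integrableOn_f β γ _ hγ hp).mono_set Set.Ioo_subset_Ioi_self))
    (ae_restrict_of_forall_mem measurableSet_Ioo
      (fun y hy => f_nonneg β γ _ hγ hp.le hy.1.le))]
  rw [integral_f_Ioo β γ _ hγ hp hx]

instance weibullMeasure.instSFinite (α β γ : ℝ) : SFinite (weibullMeasure α β γ) := by
  unfold weibullMeasure; infer_instance

end WBaux

open WBaux

/-- **Pythagorean Won-Loss Formula.** If `X`, `Y` are independent Weibulls with
parameters `(αRS, β, γ)` and `(αRA, β, γ)`, then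
`Prob(X > Y) = αRS^γ / (αRS^γ + αRA^γ)`. Independence is encoded via the
product measure. -/
theorem pythagorean_won_loss (αRS αRA β γ : ℝ) (hRS : 0 < αRS) (hRA : 0 < αRA)
    (hγ : 0 < γ) :
    ((weibullMeasure αRS β γ).prod (weibullMeasure αRA β γ)) {p : ℝ × ℝ | p.2 < p.1} =
      ENNReal.ofReal (αRS ^ γ / (αRS ^ γ + αRA ^ γ)) := by
  have hA : (0:ℝ) < αRS ^ γ := Real.rpow_pos_of_pos hRS γ
  have hB : (0:ℝ) < αRA ^ γ := Real.rpow_pos_of_pos hRA γ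
  set a : ℝ := (αRS ^ γ)⁻¹ with ha_def
  set q : ℝ := (αRA ^ γ)⁻¹ with hq_def
  have haq : (0:ℝ) < a := inv_pos.2 hA
  have hqq : (0:ℝ) < q := inv_pos.2 hB
  have haq' : (0:ℝ) < a + q := by linarith
  -- the integrand after reducing to a Lebesgue integral
  set h : ℝ → ℝ := fun x => f β γ a x * (1 - Real.exp (-q * (x - β) ^ γ)) with hh_def
  have hident : ∀ x, h x = f β γ a x - (a / (a + q)) * f β γ (a + q) x := by
    intro x
    simp only [hh_def, f]
    rw [show -(a + q) * (x - β) ^ γ = -a * (x - β) ^ γ + -q * (x - β) ^ γ by ring,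
      Real.exp_add]
    field_simp
  have hint : IntegrableOn h (Ioi β) volume := by
    have := (integrableOn_f β γ a hγ haq).sub
      ((integrableOn_f β γ (a + q) hγ haq').const_mul (a / (a + q)))
    exact MeasureTheory.IntegrableOn.congr_fun this (fun x _ => (hident x).symm) measurableSet_Ioi
  have hval : ∫ x in Ioi β, h x = 1 - a / (a + q) := by
    rw [setIntegral_congr_fun measurableSet_Ioi (fun x _ => hident x),
      integral_sub (integrableOn_f β γ a hγ haq)
        ((integrableOn_f β γ (a + q) hγ haq').const_mul (a / (a + q))),
      integral_const_mul, integral_f β γ a hγ haq, integral_f β γ (a + q) hγ haq']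
    ring
  have hnonneg : ∀ x ∈ Ioi β, 0 ≤ h x := by
    intro x hx
    apply mul_nonneg (f_nonneg β γ a hγ haq.le (le_of_lt hx))
    rw [sub_nonneg, Real.exp_le_one_iff]
    have : (0:ℝ) ≤ (x - β) ^ γ := Real.rpow_nonneg (by simp at hx; linarith) γ
    nlinarith
  have hFmeas : Measurable fun x => weibullMeasure αRA β γ (Iio x) :=
    Monotone.measurable (fun x y hxy => measure_mono (Set.Iio_subset_Iio hxy))
  rw [Measure.prod_apply (measurableSet_lt measurable_snd measurable_fst)]
  have hpre : ∀ x : ℝ, (Prod.mk x ⁻¹' {p : ℝ × ℝ | p.2 < p.1}) = Iio x := fun x => rfl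
  simp only [hpre]
  rw [weibullMeasure,
    lintegral_withDensity_eq_lintegral_mul _ (measurable_pdf αRS β γ).ennreal_ofReal hFmeas]
  have key : ∀ x, (fun x => ENNReal.ofReal (weibullPDF αRS β γ x)) x
        * weibullMeasure αRA β γ (Iio x)
      = Set.indicator (Ioi β) (fun x => ENNReal.ofReal (h x)) x := by
    intro x
    beta_reduce
    rcases lt_trichotomy x β with hx | hx | hx
    · rw [cdf_of_le αRA β γ hx.le, mul_zero,
        Set.indicator_of_notMem (Set.notMem_Ioi.2 hx.le)]
    · subst hx
      rw [cdf_of_le αRA x γ le_rfl, mul_zero,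
        Set.indicator_of_notMem (Set.notMem_Ioi.2 le_rfl)]
    · rw [Set.indicator_of_mem (Set.mem_Ioi.2 hx), cdf_of_ge αRA β γ hRA hγ hx.le,
        pdf_eq αRS β γ hRS hx.le,
        ← ENNReal.ofReal_mul (f_nonneg β γ a hγ haq.le hx.le)]
  calc ∫⁻ x, ((fun x => ENNReal.ofReal (weibullPDF αRS β γ x)) *
          fun x => weibullMeasure αRA β γ (Iio x)) x ∂volume
      = ∫⁻ x, Set.indicator (Ioi β) (fun x => ENNReal.ofReal (h x)) x ∂volume := by
        exact lintegral_congr (fun x => key x)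
    _ = ∫⁻ x in Ioi β, ENNReal.ofReal (h x) ∂volume := by
        rw [lintegral_indicator measurableSet_Ioi _]
    _ = ENNReal.ofReal (∫ x in Ioi β, h x) := by
        rw [← ofReal_integral_eq_lintegral_ofReal hint
          (ae_restrict_of_forall_mem measurableSet_Ioi hnonneg)]
    _ = ENNReal.ofReal (αRS ^ γ / (αRS ^ γ + αRA ^ γ)) := by
        rw [hval]
        congr 1
        rw [ha_def, hq_def]
        field_simp
        ring
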